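/- Fix integers 1 ≤ I < K and reals b > 0, c, ρ. Define Γ = { v ∈ ∏_{i=I+1}^{K} X_i : (ρ − 1/2)·b ≤ c − ∑_{j=I+1}^{K} log μ_j(v_j) ≤ (ρ + 1/2)·b }, Ψ = { v ∈ ∏_{i=I+1}^{K} X_i : (ρ − 1/2)·b − (I+1)·log 5 ≤ c − ∑_{j=I+1}^{K} log μ_j(v_j) ≤ (ρ + 1/2)·b + (I+1)·log 5 }, V⁰ = { v : ∑_{i=I+1}^{K} π_i(v_i) ≡ 0 (mod 2) } and V¹ = { v : ∑_{i=I+1}^{K} π_i(v_i) ≡ 1 (mod 2) }. Let A₀¹ = { v ∈ Γ : v_{I+1} = 0 and ∑_{i=I+2}^{K} π_i(v_i) ≡ 1 (mod 2) }, A₁⁰ = { v ∈ Γ : π_{I+1}(v_{I+1}) = 1 and ∑_{i=I+2}^{K} π_i(v_i) ≡ 0 (mod 2) }, B₁¹ = { x ∈ ∏_{i=I+1}^{K} X_i : x_{I+1} ≠ 0 and there exists v ∈ A₀¹ with x_i = v_i for all i ≥ I+2 }, and B₀⁰ = { x ∈ ∏_{i=I+1}^{K} X_i : x_{I+1} = 0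 and there exists v ∈ A₁⁰ with x_i = v_i for all i ≥ I+2 }. Then B₀⁰ ∪ B₁¹ ⊆ Ψ ∩ V⁰ and μ(Z_{B₀⁰ ∪ B₁¹}) ≥ μ(Z_{Γ ∩ V¹}). -/

import Mathlib

open MeasureTheory ENNReal Filter

/-- The coordinate space: Lean index `n` is paper index `n+1`, so this is
`X_{n+1} = {0,1,…,5^{n+1}}`. -/
abbrev Xc (n : ℕ) : Type := Fin (5 ^ (n + 1) + 1)

/-- The weight of a point of `X_{n+1}`: `μ_{n+1}(0) = 1/2`, `μ_{n+1}(i) = 1/(2·5^{n+1})`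
for `i ≠ 0`. -/
noncomputable def w (n : ℕ) (a : Xc n) : ℝ≥0∞ :=
  if a = 0 then 1 / 2 else 1 / (2 * 5 ^ (n + 1))

/-- The full product space `X = ∏_{n ≥ 1} X_n`. -/
abbrev XX : Type := (n : ℕ) → Xc n

/-- The cylinder `Z_A` determined by a set `A` of configurations on a finite set `Γ`
of coordinates. -/
def cylSet (Γ : Finset ℕ) (A : Set ((i : Γ) → Xc i)) : Set XX :=
  {x | (fun i : Γ => x i) ∈ A}

/-- The point cylinder `Z_u`. -/
def cylPt (Γ : Finset ℕ) (u : (i : Γ) → Xc i) : Set XX := cylSet Γ {u}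

/-- `μ` is the product measure `⊗ μ_n` iff every point cylinder gets the product of the
weights of its coordinates. (This property determines the product measure uniquely.) -/
def IsProductMeasure (μ : Measure XX) : Prop :=
  ∀ (Γ : Finset ℕ) (u : (i : Γ) → Xc i), μ (cylPt Γ u) = ∏ i : Γ, w i (u i)

/-- The real-valued weight `μ_{n+1}(a)`. -/
noncomputable def wR (n : ℕ) (a : Xc n) : ℝ :=
  if a = 0 then 1 / 2 else 1 / (2 * 5 ^ (n + 1))

/-- `π_{n+1} : X_{n+1} → {0,1}`, sending `0` to `0` and everything else to `1`. -/
def par (n : ℕ) (a : Xc n) : ℕ := if a = 0 then 0 else 1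

lemma cylPt_measurable (Δ : Finset ℕ) (u : (i : Δ) → Xc i) :
    MeasurableSet (cylPt Δ u) := by
  have : cylPt Δ u = ⋂ i : Δ, (fun x : XX => x i) ⁻¹' {u i} := by
    ext x
    simp only [cylPt, cylSet, Set.mem_setOf_eq, Set.mem_singleton_iff, Set.mem_iInter,
      Set.mem_preimage, funext_iff]
  rw [this]
  exact MeasurableSet.iInter fun i => (measurable_pi_apply (i : ℕ)) (measurableSet_singleton _)

lemma cylSet_measure (μ : Measure XX) (hμ : IsProductMeasure μ) (Δ : Finset ℕ)
    (A : Set ((i : Δ) → Xc i)) (s : Finset ((i : Δ) → Xc i)) (hs : ∀ u, u ∈ s ↔ u ∈ A) :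
    μ (cylSet Δ A) = ∑ u ∈ s, ∏ i : Δ, w i (u i) := by
  have h1 : cylSet Δ A = ⋃ u ∈ s, cylPt Δ u := by
    ext x
    simp only [cylSet, Set.mem_setOf_eq, Set.mem_iUnion, cylPt, Set.mem_singleton_iff]
    constructor
    · intro hx; exact ⟨_, (hs _).2 hx, rfl⟩
    · rintro ⟨u, hu, h⟩; rw [h]; exact (hs _).1 hu
  rw [h1, measure_biUnion_finset ?_ (fun u _ => cylPt_measurable Δ u)]
  · exact Finset.sum_congr rfl fun u _ => hμ Δ u
  · intro u _ v _ huv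
    simp only [Function.onFun, Set.disjoint_left]
    intro x hx hx'
    exact huv (hx.symm.trans hx')

lemma split_sum {I K : ℕ} (hIme : I ∈ Finset.Ico I K) {M : Type*} [AddCommMonoid M]
    (f : (i : Finset.Ico I K) → M) :
    ∑ i : Finset.Ico I K, f i
      = f ⟨I, hIme⟩ + ∑ i : Finset.Ico I K, (if I + 1 ≤ (i : ℕ) then f i else 0) := by
  classical
  have h1 : (Finset.univ.filter fun i : Finset.Ico I K => I + 1 ≤ (i : ℕ))
      = Finset.univ.erase ⟨I, hIme⟩ := by
    ext i
    simp only [Finset.mem_filter, Finset.mem_univ, true_and, Finset.mem_erase, and_true]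
    have hi2 := i.2
    rw [Finset.mem_Ico] at hi2
    constructor
    · intro h e
      rw [Subtype.ext_iff] at e
      simp only at e
      omega
    · intro h
      have : (i : ℕ) ≠ I := fun e => h (Subtype.ext e)
      omega
  rw [← Finset.sum_filter, h1, Finset.add_sum_erase _ f (Finset.mem_univ _)]

lemma ennarith (I : ℕ) : (5:ℝ≥0∞)^(I+1) * (1/(2*5^(I+1))) = 1/2 := by
  have p0 : ((5:ℝ≥0∞))^(I+1) ≠ 0 := pow_ne_zero _ (by norm_num)
  have pt : ((5:ℝ≥0∞))^(I+1) ≠ ⊤ := ENNReal.pow_ne_top (by norm_num)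
  rw [one_div, ENNReal.mul_inv (Or.inl (by norm_num)) (Or.inl (by norm_num))]
  calc (5:ℝ≥0∞)^(I+1) * ((2:ℝ≥0∞)⁻¹ * ((5:ℝ≥0∞)^(I+1))⁻¹)
      = ((5:ℝ≥0∞)^(I+1) * ((5:ℝ≥0∞)^(I+1))⁻¹) * 2⁻¹ := by ring
    _ = 1 * 2⁻¹ := by rw [ENNReal.mul_inv_cancel p0 pt]
    _ = 1/2 := by rw [one_mul, one_div]

lemma wsum (I : ℕ) : ∑ a ∈ Finset.univ.erase (0 : Xc I), w I a = 1/2 := by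
  have : ∀ a ∈ Finset.univ.erase (0 : Xc I), w I a = 1/(2*5^(I+1)) :=
    fun a ha => if_neg (Finset.ne_of_mem_erase ha)
  rw [Finset.sum_congr rfl this, Finset.sum_const, Finset.card_erase_of_mem (Finset.mem_univ _),
    Finset.card_univ, Fintype.card_fin, nsmul_eq_mul]
  push_cast
  exact ennarith I

lemma ne_idx {I K : ℕ} (hImem : I ∈ Finset.Ico I K) (i : Finset.Ico I K) :
    i ≠ ⟨I, hImem⟩ ↔ I + 1 ≤ (i : ℕ) := by
  have hi2 := i.2
  rw [Finset.mem_Ico] at hi2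
  constructor
  · intro h
    have : (i : ℕ) ≠ I := fun e => h (Subtype.ext e)
    omega
  · intro h e
    have : (i : ℕ) = I := by rw [e]
    omega

lemma log_split {I K : ℕ} (hImem : I ∈ Finset.Ico I K) (x : (i : Finset.Ico I K) → Xc i) :
    ∑ i : Finset.Ico I K, Real.log (wR i (x i))
      = Real.log (wR I (x ⟨I, hImem⟩)) +
        ∑ i : Finset.Ico I K, (if I + 1 ≤ (i : ℕ) then Real.log (wR i (x i)) else 0) :=
  split_sum hImem (fun i => Real.log (wR i (x i)))

lemma par_split {I K : ℕ} (hImem : I ∈ Finset.Ico I K) (x : (i : Finset.Ico I K) → Xc i) :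
    ∑ i : Finset.Ico I K, par i (x i)
      = par I (x ⟨I, hImem⟩) +
        ∑ i : Finset.Ico I K, (if I + 1 ≤ (i : ℕ) then par i (x i) else 0) :=
  split_sum hImem (fun i => par i (x i))

lemma sum_ineq {I K : ℕ} (hImem : I ∈ Finset.Ico I K)
    (FA01 FA10 FB11 FB00 : Finset ((i : Finset.Ico I K) → Xc i))
    (h01z : ∀ v ∈ FA01, v ⟨I, hImem⟩ = 0)
    (h10z : ∀ v ∈ FA10, v ⟨I, hImem⟩ ≠ 0)
    (hB11 : ∀ x : (i : Finset.Ico I K) → Xc i,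
      x ⟨I, hImem⟩ ≠ 0 → Function.update x ⟨I, hImem⟩ 0 ∈ FA01 → x ∈ FB11)
    (hB00 : ∀ v ∈ FA10, Function.update v ⟨I, hImem⟩ 0 ∈ FB00) :
    (∑ v ∈ FA01, ∏ i : Finset.Ico I K, w i (v i)) +
        ∑ v ∈ FA10, ∏ i : Finset.Ico I K, w i (v i)
      ≤ (∑ x ∈ FB00, ∏ i : Finset.Ico I K, w i (x i)) +
        ∑ x ∈ FB11, ∏ i : Finset.Ico I K, w i (x i) := by
  classical
  set iI : {i // i ∈ Finset.Ico I K} := ⟨I, hImem⟩ with hiI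
  have hg : ∀ v : (i : Finset.Ico I K) → Xc i,
      (∏ i : Finset.Ico I K, w i (v i))
        = w iI (v iI) * ∏ i ∈ Finset.univ.erase iI, w i (v i) :=
    fun v => (Finset.mul_prod_erase Finset.univ _ (Finset.mem_univ iI)).symm
  have hWupd : ∀ (v : (i : Finset.Ico I K) → Xc i) (a : Xc I),
      (∏ i ∈ Finset.univ.erase iI, w i (Function.update v iI a i))
        = ∏ i ∈ Finset.univ.erase iI, w i (v i) :=
    fun v a => Finset.prod_congr rfl fun i hi => by
      rw [Function.update_of_ne (Finset.ne_of_mem_erase hi)]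
  -- Step A : ∑ FA01 ≤ ∑ FB11
  have stepA : (∑ v ∈ FA01, ∏ i : Finset.Ico I K, w i (v i))
      ≤ ∑ x ∈ FB11, ∏ i : Finset.Ico I K, w i (x i) := by
    set f : Xc I × ((i : Finset.Ico I K) → Xc i) → ((i : Finset.Ico I K) → Xc i) :=
      fun p => Function.update p.2 iI p.1 with hf
    set E : Finset (Xc I × ((i : Finset.Ico I K) → Xc i)) :=
      (Finset.univ.erase (0 : Xc I)) ×ˢ FA01 with hE
    have hinj : ∀ p ∈ E, ∀ q ∈ E, f p = f q → p = q := by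
      rintro ⟨a, t⟩ hp ⟨b, u⟩ hq h
      rw [hE, Finset.mem_product] at hp hq
      have hab : a = b := by
        have := congrFun h iI
        simpa [hf, Function.update_self] using this
      have htu : t = u := by
        funext i
        by_cases hi : i = iI
        · subst hi; rw [h01z t hp.2, h01z u hq.2]
        · have := congrFun h i
          simpa [hf, Function.update_of_ne hi] using this
      exact Prod.ext hab htu
    have himg : E.image f ⊆ FB11 := by
      intro x hx
      rw [Finset.mem_image] at hx
      obtain ⟨⟨a, t⟩, hp, rfl⟩ := hx
      rw [hE, Finset.mem_product] at hp
      refine hB11 _ ?_ ?_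
      · simpa [hf, Function.update_self] using Finset.ne_of_mem_erase hp.1
      · have : Function.update (f (a, t)) iI 0 = t := by
          funext i
          by_cases hi : i = iI
          · subst hi; rw [Function.update_self, h01z t hp.2]
          · rw [Function.update_of_ne hi, hf]; simp only
            rw [Function.update_of_ne hi]
        rw [this]; exact hp.2
    have hcalc : (∑ x ∈ E.image f, ∏ i : Finset.Ico I K, w i (x i))
        = ∑ v ∈ FA01, ∏ i : Finset.Ico I K, w i (v i) := by
      rw [Finset.sum_image hinj, hE, Finset.sum_product]
      have h1 : ∀ a ∈ Finset.univ.erase (0 : Xc I), ∀ t ∈ FA01,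
          (∏ i : Finset.Ico I K, w i (f (a, t) i))
            = w (I:ℕ) a * ∏ i ∈ Finset.univ.erase iI, w i (t i) := by
        intro a _ t _
        rw [hg, hf]
        simp only
        rw [Function.update_self, hWupd]
      calc ∑ a ∈ Finset.univ.erase (0 : Xc I), ∑ t ∈ FA01,
              ∏ i : Finset.Ico I K, w i (f (a, t) i)
          = ∑ a ∈ Finset.univ.erase (0 : Xc I), ∑ t ∈ FA01,
              w (I:ℕ) a * ∏ i ∈ Finset.univ.erase iI, w i (t i) := by
            refine Finset.sum_congr rfl fun a ha => Finset.sum_congr rfl fun t ht => ?_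
            exact h1 a ha t ht
        _ = (∑ a ∈ Finset.univ.erase (0 : Xc I), w (I:ℕ) a) *
              ∑ t ∈ FA01, ∏ i ∈ Finset.univ.erase iI, w i (t i) := by
            rw [Finset.sum_mul_sum]
        _ = (1/2 : ℝ≥0∞) * ∑ t ∈ FA01, ∏ i ∈ Finset.univ.erase iI, w i (t i) := by
            rw [wsum]
        _ = ∑ v ∈ FA01, ∏ i : Finset.Ico I K, w i (v i) := by
            rw [Finset.mul_sum]
            refine Finset.sum_congr rfl fun v hv => ?_
            rw [hg v]
            congr 1
            rw [h01z v hv]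
            exact (if_pos rfl).symm
    calc (∑ v ∈ FA01, ∏ i : Finset.Ico I K, w i (v i))
        = ∑ x ∈ E.image f, ∏ i : Finset.Ico I K, w i (x i) := hcalc.symm
      _ ≤ ∑ x ∈ FB11, ∏ i : Finset.Ico I K, w i (x i) :=
          Finset.sum_le_sum_of_subset himg
  -- Step B : ∑ FA10 ≤ ∑ FB00
  have stepB : (∑ v ∈ FA10, ∏ i : Finset.Ico I K, w i (v i))
      ≤ ∑ x ∈ FB00, ∏ i : Finset.Ico I K, w i (x i) := by
    have harith : (1/(2*5^(I+1)) : ℝ≥0∞) * ((5^(I+1) : ℕ) : ℝ≥0∞) = 1/2 := by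
      push_cast
      rw [mul_comm]
      exact ennarith I
    have hcard : ∀ t, (FA10.filter fun v => Function.update v iI 0 = t).card ≤ 5^(I+1) := by
      intro t
      have h := Finset.card_le_card_of_injOn
        (s := FA10.filter fun v => Function.update v iI 0 = t)
        (t := Finset.univ.erase (0 : Xc I))
        (fun v : (i : Finset.Ico I K) → Xc i => v iI)
        (fun v hv => by
          rw [Finset.mem_coe, Finset.mem_filter] at hv
          exact Finset.mem_erase.mpr ⟨h10z v hv.1, Finset.mem_univ _⟩)
        (by
          intro v hv v' hv' h
          simp only [Finset.coe_filter, Set.mem_setOf_eq] at hv hv'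
          funext i
          by_cases hi : i = iI
          · subst hi; exact h
          · have := congrFun (hv.2.trans hv'.2.symm) i
            simpa [Function.update_of_ne hi] using this)
      calc (FA10.filter fun v => Function.update v iI 0 = t).card
          ≤ (Finset.univ.erase (0 : Xc I)).card := h
        _ = 5^(I+1) := by
            rw [Finset.card_erase_of_mem (Finset.mem_univ _), Finset.card_univ,
              Fintype.card_fin, Nat.add_sub_cancel]
    have himg : FA10.image (fun v => Function.update v iI 0) ⊆ FB00 := by
      intro t ht
      rw [Finset.mem_image] at ht
      obtain ⟨v, hv, rfl⟩ := ht
      exact hB00 v hv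
    have hcomp := Finset.sum_comp (s := FA10)
      (fun u : (i : Finset.Ico I K) → Xc i => ∏ i ∈ Finset.univ.erase iI, w (i:ℕ) (u i))
      (fun v => Function.update v iI 0)
    calc (∑ v ∈ FA10, ∏ i : Finset.Ico I K, w i (v i))
        = ∑ v ∈ FA10, (1/(2*5^(I+1)) : ℝ≥0∞) *
            ∏ i ∈ Finset.univ.erase iI, w i (Function.update v iI 0 i) := by
          refine Finset.sum_congr rfl fun v hv => ?_
          rw [hg v, hWupd]
          congr 1
          exact if_neg (h10z v hv)
      _ = (1/(2*5^(I+1)) : ℝ≥0∞) * ∑ v ∈ FA10,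
            ∏ i ∈ Finset.univ.erase iI, w i (Function.update v iI 0 i) := by
          rw [Finset.mul_sum]
      _ = (1/(2*5^(I+1)) : ℝ≥0∞) * ∑ t ∈ FA10.image (fun v => Function.update v iI 0),
            (FA10.filter fun v => Function.update v iI 0 = t).card •
              ∏ i ∈ Finset.univ.erase iI, w i (t i) := by
          rw [hcomp]
      _ ≤ (1/(2*5^(I+1)) : ℝ≥0∞) * ∑ t ∈ FA10.image (fun v => Function.update v iI 0),
            (5^(I+1) : ℕ) • ∏ i ∈ Finset.univ.erase iI, w i (t i) := by
          refine mul_le_mul_right (Finset.sum_le_sum fun t _ => ?_) _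
          simp only [nsmul_eq_mul]
          exact mul_le_mul_left (Nat.cast_le.mpr (hcard t)) _
      _ = ∑ t ∈ FA10.image (fun v => Function.update v iI 0),
            ∏ i : Finset.Ico I K, w i (t i) := by
          rw [Finset.mul_sum]
          refine Finset.sum_congr rfl fun t ht => ?_
          rw [Finset.mem_image] at ht
          obtain ⟨v, _, rfl⟩ := ht
          rw [hg, nsmul_eq_mul, ← mul_assoc, harith, hWupd]
          congr 1
          rw [Function.update_self]
          exact (if_pos rfl).symm
      _ ≤ ∑ x ∈ FB00, ∏ i : Finset.Ico I K, w i (x i) :=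
          Finset.sum_le_sum_of_subset himg
  exact (add_le_add stepA stepB).trans_eq (add_comm _ _)

theorem statement6 (μ : Measure XX) (hμ : IsProductMeasure μ)
    (I K : ℕ) (hI : 1 ≤ I) (hIK : I + 2 ≤ K) (b c ρ : ℝ) (hb : 0 < b)
    (Γ Ψ V0 V1 A01 A10 B11 B00 : Set ((i : Finset.Ico I K) → Xc i))
    (hΓ : Γ = {v | (ρ - 1 / 2) * b ≤ c - ∑ i : Finset.Ico I K, Real.log (wR i (v i)) ∧
      c - ∑ i : Finset.Ico I K, Real.log (wR i (v i)) ≤ (ρ + 1 / 2) * b})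
    (hΨ : Ψ = {v | (ρ - 1 / 2) * b - ((I : ℝ) + 1) * Real.log 5 ≤
        c - ∑ i : Finset.Ico I K, Real.log (wR i (v i)) ∧
      c - ∑ i : Finset.Ico I K, Real.log (wR i (v i)) ≤
        (ρ + 1 / 2) * b + ((I : ℝ) + 1) * Real.log 5})
    (hV0 : V0 = {v | (∑ i : Finset.Ico I K, par i (v i)) % 2 = 0})
    (hV1 : V1 = {v | (∑ i : Finset.Ico I K, par i (v i)) % 2 = 1})
    (hA01 : A01 = {v | v ∈ Γ ∧ v ⟨I, Finset.mem_Ico.mpr ⟨le_refl I, by omega⟩⟩ = 0 ∧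
      (∑ i : Finset.Ico I K, if I + 1 ≤ (i : ℕ) then par i (v i) else 0) % 2 = 1})
    (hA10 : A10 = {v | v ∈ Γ ∧ par I (v ⟨I, Finset.mem_Ico.mpr ⟨le_refl I, by omega⟩⟩) = 1 ∧
      (∑ i : Finset.Ico I K, if I + 1 ≤ (i : ℕ) then par i (v i) else 0) % 2 = 0})
    (hB11 : B11 = {x | x ⟨I, Finset.mem_Ico.mpr ⟨le_refl I, by omega⟩⟩ ≠ 0 ∧
      ∃ v ∈ A01, ∀ i : Finset.Ico I K, I + 1 ≤ (i : ℕ) → x i = v i})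
    (hB00 : B00 = {x | x ⟨I, Finset.mem_Ico.mpr ⟨le_refl I, by omega⟩⟩ = 0 ∧
      ∃ v ∈ A10, ∀ i : Finset.Ico I K, I + 1 ≤ (i : ℕ) → x i = v i}) :
    B00 ∪ B11 ⊆ Ψ ∩ V0 ∧
      μ (cylSet (Finset.Ico I K) (Γ ∩ V1)) ≤ μ (cylSet (Finset.Ico I K) (B00 ∪ B11)) := by
  classical
  have hImem : I ∈ Finset.Ico I K := Finset.mem_Ico.mpr ⟨le_refl I, by omega⟩
  have hlog5 : (0:ℝ) ≤ Real.log 5 := Real.log_nonneg (by norm_num)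
  have hL : (0:ℝ) ≤ ((I:ℝ)+1) * Real.log 5 := mul_nonneg (by positivity) hlog5
  have l1 : Real.log ((1:ℝ)/2) = -Real.log 2 := by rw [one_div, Real.log_inv]
  have l2 : Real.log ((1:ℝ)/(2*(5:ℝ)^(I+1))) = -(Real.log 2 + ((I:ℝ)+1) * Real.log 5) := by
    rw [one_div, Real.log_inv, Real.log_mul (by norm_num) (by positivity), Real.log_pow]
    push_cast
    ring
  constructor
  · rintro x (hx | hx)
    · -- x ∈ B00
      rw [hB00] at hx
      obtain ⟨hx0s, v, hvA, hag⟩ := hx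
      have hx0 : x ⟨I, hImem⟩ = 0 := hx0s
      rw [hA10] at hvA
      obtain ⟨hvΓ, hvIs, hvt⟩ := hvA
      have hvI : par I (v ⟨I, hImem⟩) = 1 := hvIs
      rw [hΓ] at hvΓ
      obtain ⟨hvl, hvr⟩ := hvΓ
      have hv0 : v ⟨I, hImem⟩ ≠ 0 := by
        intro e
        rw [e] at hvI
        simp [par] at hvI
      have htR : (∑ i : Finset.Ico I K, if I + 1 ≤ (i : ℕ) then Real.log (wR i (x i)) else 0)
          = ∑ i : Finset.Ico I K, if I + 1 ≤ (i : ℕ) then Real.log (wR i (v i)) else 0 := by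
        refine Finset.sum_congr rfl fun i _ => ?_
        by_cases h : I + 1 ≤ (i : ℕ)
        · rw [if_pos h, if_pos h, hag i h]
        · rw [if_neg h, if_neg h]
      have hwx : wR I (x ⟨I, hImem⟩) = 1/2 := by rw [hx0]; exact if_pos rfl
      have hwv : wR I (v ⟨I, hImem⟩) = 1/(2*(5:ℝ)^(I+1)) := if_neg hv0
      have hsum : (∑ i : Finset.Ico I K, Real.log (wR i (x i)))
          = (∑ i : Finset.Ico I K, Real.log (wR i (v i))) + ((I:ℝ)+1) * Real.log 5 := by
        rw [log_split hImem x, log_split hImem v, htR, hwx, hwv, l1, l2]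
        ring
      constructor
      · rw [hΨ, Set.mem_setOf_eq, hsum]
        constructor <;> linarith
      · rw [hV0, Set.mem_setOf_eq, par_split hImem x]
        have htN : (∑ i : Finset.Ico I K, if I + 1 ≤ (i : ℕ) then par i (x i) else 0)
            = ∑ i : Finset.Ico I K, if I + 1 ≤ (i : ℕ) then par i (v i) else 0 := by
          refine Finset.sum_congr rfl fun i _ => ?_
          by_cases h : I + 1 ≤ (i : ℕ)
          · rw [if_pos h, if_pos h, hag i h]
          · rw [if_neg h, if_neg h]
        have hpx : par I (x ⟨I, hImem⟩) = 0 := by rw [hx0]; exact if_pos rfl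
        rw [htN, hpx]
        omega
    · -- x ∈ B11
      rw [hB11] at hx
      obtain ⟨hx0s, v, hvA, hag⟩ := hx
      have hx0 : x ⟨I, hImem⟩ ≠ 0 := hx0s
      rw [hA01] at hvA
      obtain ⟨hvΓ, hvIs, hvt⟩ := hvA
      have hvI : v ⟨I, hImem⟩ = 0 := hvIs
      rw [hΓ] at hvΓ
      obtain ⟨hvl, hvr⟩ := hvΓ
      have htR : (∑ i : Finset.Ico I K, if I + 1 ≤ (i : ℕ) then Real.log (wR i (x i)) else 0)
          = ∑ i : Finset.Ico I K, if I + 1 ≤ (i : ℕ) then Real.log (wR i (v i)) else 0 := by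
        refine Finset.sum_congr rfl fun i _ => ?_
        by_cases h : I + 1 ≤ (i : ℕ)
        · rw [if_pos h, if_pos h, hag i h]
        · rw [if_neg h, if_neg h]
      have hwx : wR I (x ⟨I, hImem⟩) = 1/(2*(5:ℝ)^(I+1)) := if_neg hx0
      have hwv : wR I (v ⟨I, hImem⟩) = 1/2 := by rw [hvI]; exact if_pos rfl
      have hsum : (∑ i : Finset.Ico I K, Real.log (wR i (x i)))
          = (∑ i : Finset.Ico I K, Real.log (wR i (v i))) - ((I:ℝ)+1) * Real.log 5 := by
        rw [log_split hImem x, log_split hImem v, htR, hwx, hwv, l1, l2]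
        ring
      constructor
      · rw [hΨ, Set.mem_setOf_eq, hsum]
        constructor <;> linarith
      · rw [hV0, Set.mem_setOf_eq, par_split hImem x]
        have htN : (∑ i : Finset.Ico I K, if I + 1 ≤ (i : ℕ) then par i (x i) else 0)
            = ∑ i : Finset.Ico I K, if I + 1 ≤ (i : ℕ) then par i (v i) else 0 := by
          refine Finset.sum_congr rfl fun i _ => ?_
          by_cases h : I + 1 ≤ (i : ℕ)
          · rw [if_pos h, if_pos h, hag i h]
          · rw [if_neg h, if_neg h]
        have hpx : par I (x ⟨I, hImem⟩) = 1 := if_neg hx0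
        rw [htN, hpx]
        omega
  · -- measure inequality
    set FA01 : Finset ((i : Finset.Ico I K) → Xc i) := Finset.univ.filter (· ∈ A01) with hFA01
    set FA10 : Finset ((i : Finset.Ico I K) → Xc i) := Finset.univ.filter (· ∈ A10) with hFA10
    set FB11 : Finset ((i : Finset.Ico I K) → Xc i) := Finset.univ.filter (· ∈ B11) with hFB11
    set FB00 : Finset ((i : Finset.Ico I K) → Xc i) := Finset.univ.filter (· ∈ B00) with hFB00
    have hUnion : Γ ∩ V1 = A01 ∪ A10 := by
      ext v
      rw [hA01, hA10, hV1, Set.mem_inter_iff]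
      simp only [Set.mem_union, Set.mem_setOf_eq]
      rw [par_split hImem v]
      by_cases e : v ⟨I, hImem⟩ = 0
      · have hp : par I (v ⟨I, hImem⟩) = 0 := by rw [e]; exact if_pos rfl
        constructor
        · rintro ⟨h1, h2⟩
          exact Or.inl ⟨h1, e, by omega⟩
        · rintro (⟨h1, h2, h3⟩ | ⟨h1, h2, h3⟩)
          · exact ⟨h1, by omega⟩
          · have h2' : par I (v ⟨I, hImem⟩) = 1 := h2
            omega
      · have hp : par I (v ⟨I, hImem⟩) = 1 := if_neg e
        constructor
        · rintro ⟨h1, h2⟩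
          exact Or.inr ⟨h1, hp, by omega⟩
        · rintro (⟨h1, h2, h3⟩ | ⟨h1, h2, h3⟩)
          · have h2' : v ⟨I, hImem⟩ = 0 := h2
            exact absurd h2' e
          · exact ⟨h1, by omega⟩
    have key1 : μ (cylSet (Finset.Ico I K) (Γ ∩ V1))
        = ∑ u ∈ FA01 ∪ FA10, ∏ i : Finset.Ico I K, w i (u i) := by
      refine cylSet_measure μ hμ _ _ _ fun u => ?_
      rw [hFA01, hFA10]
      simp only [Finset.mem_union, Finset.mem_filter, Finset.mem_univ, true_and]
      rw [hUnion]
      exact Iff.rfl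
    have key2 : μ (cylSet (Finset.Ico I K) (B00 ∪ B11))
        = ∑ u ∈ FB00 ∪ FB11, ∏ i : Finset.Ico I K, w i (u i) := by
      refine cylSet_measure μ hμ _ _ _ fun u => ?_
      rw [hFB00, hFB11]
      simp only [Finset.mem_union, Finset.mem_filter, Finset.mem_univ, true_and]
      exact Iff.rfl
    have h01z : ∀ v ∈ FA01, v ⟨I, hImem⟩ = 0 := by
      intro v hv
      have h := (Finset.mem_filter.mp hv).2
      rw [hA01] at h
      exact h.2.1
    have h10z : ∀ v ∈ FA10, v ⟨I, hImem⟩ ≠ 0 := by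
      intro v hv e
      have h := (Finset.mem_filter.mp hv).2
      rw [hA10] at h
      have h2 : par I (v ⟨I, hImem⟩) = 1 := h.2.1
      rw [e] at h2
      simp [par] at h2
    have hd1 : Disjoint FA01 FA10 := by
      rw [Finset.disjoint_left]
      intro v hv1 hv2
      exact h10z v hv2 (h01z v hv1)
    have hd2 : Disjoint FB00 FB11 := by
      rw [Finset.disjoint_left]
      intro x hx1 hx2
      have h1 := (Finset.mem_filter.mp hx1).2
      have h2 := (Finset.mem_filter.mp hx2).2
      rw [hB00] at h1
      rw [hB11] at h2
      exact h2.1 h1.1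
    have hB11' : ∀ x : (i : Finset.Ico I K) → Xc i,
        x ⟨I, hImem⟩ ≠ 0 → Function.update x ⟨I, hImem⟩ 0 ∈ FA01 → x ∈ FB11 := by
      intro x hne hupd
      have hA : Function.update x ⟨I, hImem⟩ 0 ∈ A01 := (Finset.mem_filter.mp hupd).2
      rw [hFB11]
      refine Finset.mem_filter.mpr ⟨Finset.mem_univ _, ?_⟩
      rw [hB11]
      refine ⟨hne, Function.update x ⟨I, hImem⟩ 0, hA, fun i hi => ?_⟩
      exact (Function.update_of_ne ((ne_idx hImem i).mpr hi) _ _).symm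
    have hB00' : ∀ v ∈ FA10, Function.update v ⟨I, hImem⟩ 0 ∈ FB00 := by
      intro v hv
      have hA : v ∈ A10 := (Finset.mem_filter.mp hv).2
      rw [hFB00]
      refine Finset.mem_filter.mpr ⟨Finset.mem_univ _, ?_⟩
      rw [hB00]
      refine ⟨Function.update_self _ _ _, v, hA, fun i hi => ?_⟩
      exact Function.update_of_ne ((ne_idx hImem i).mpr hi) _ _
    rw [key1, key2, Finset.sum_union hd1, Finset.sum_union hd2]
    exact sum_ineq hImem FA01 FA10 FB11 FB00 h01z h10z hB11' hB00'
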